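/- arXiv:1005.4033 — 3 statements merged into one kernel-verified Lean document; each statement's English description precedes it below -/
import Mathlib

section
/- Let x, y ∈ Σ^n be chosen independently and uniformly at random. Then the probability that lcs(x,y) ≥ 5n/√|Σ| is at most e^{-5n/√|Σ|}. -/
namespace EditDist

variable {α : Type*}

/-- `Chain R k x y` means `x` can be transformed into `y` by exactly `k` steps of `R`. -/
def Chain (R : List α → List α → Prop) : ℕ → List α → List α → Prop
  | 0, x, y => x = y
  | k+1, x, y => ∃ z, R x z ∧ Chain R k z y

/-- one character insertion -/
def InsStep (x y : List α) : Prop := ∃ (p s : List α) (a : α), x = p ++ s ∧ y = p ++ a :: s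

/-- one character deletion -/
def DelStep (x y : List α) : Prop := InsStep y x

/-- one character substitution -/
def SubStep (x y : List α) : Prop := ∃ (p s : List α) (a b : α), x = p ++ a :: s ∧ y = p ++ b :: s

/-- edit distance with insertions and deletions only -/
noncomputable def edd (x y : List α) : ℕ :=
  sInf {k | Chain (fun u v => InsStep u v ∨ DelStep u v) k x y}

/-- the usual edit distance: insertions, deletions and substitutions -/
noncomputable def ed (x y : List α) : ℕ :=
  sInf {k | Chain (fun u v => InsStep u v ∨ DelStep u v ∨ SubStep u v) k x y}

/-- length of a longest common subsequence -/
noncomputable def lcs (x y : List α) : ℕ :=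
  sSup {k | ∃ z : List α, z.length = k ∧ z.Sublist x ∧ z.Sublist y}

end EditDist

open EditDist

namespace Stmt3Aux

lemma lcs_mem {α : Type*} (x y : List α) :
    ∃ z : List α, z.length = lcs x y ∧ z.Sublist x ∧ z.Sublist y := by
  have h0 : (0:ℕ) ∈ {k | ∃ z : List α, z.length = k ∧ z.Sublist x ∧ z.Sublist y} :=
    ⟨[], rfl, List.nil_sublist x, List.nil_sublist y⟩
  have hbdd : BddAbove {k | ∃ z : List α, z.length = k ∧ z.Sublist x ∧ z.Sublist y} := by
    refine ⟨x.length, ?_⟩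
    rintro m ⟨z, rfl, hzx, -⟩
    exact hzx.length_le
  exact Nat.sSup_mem ⟨0, h0⟩ hbdd

lemma lcs_le_length {α : Type*} (x y : List α) : lcs x y ≤ x.length := by
  obtain ⟨z, hz, hzx, -⟩ := lcs_mem x y
  exact hz ▸ hzx.length_le

lemma exists_sublist_of_le_lcs {α : Type*} {x y : List α} {k : ℕ} (hk : k ≤ lcs x y) :
    ∃ z : List α, z.length = k ∧ z.Sublist x ∧ z.Sublist y := by
  obtain ⟨z, hz, hzx, hzy⟩ := lcs_mem x y
  refine ⟨z.take k, ?_, (List.take_sublist _ _).trans hzx, (List.take_sublist _ _).trans hzy⟩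
  rw [List.length_take]
  omega

lemma map_sort_eq {σ : Type*} {n k : ℕ} (x : Fin n → σ) (z : List σ) (hzl : z.length = k)
    (hz : z.Sublist (List.ofFn x)) :
    ∃ s : Finset (Fin n), s.card = k ∧ (s.sort (· ≤ ·)).map x = z := by
  obtain ⟨f, hf⟩ := List.sublist_iff_exists_fin_orderEmbedding_get_eq.mp hz
  let g : Fin k ↪o Fin n :=
    ((Fin.castOrderIso hzl.symm).toOrderEmbedding.trans f).trans
      (Fin.castOrderIso (List.length_ofFn (f := x))).toOrderEmbedding
  refine ⟨Finset.image g Finset.univ, ?_, ?_⟩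
  · rw [Finset.card_image_of_injective _ g.injective, Finset.card_univ, Fintype.card_fin]
  · have hs : (Finset.image g Finset.univ).card = k := by
      rw [Finset.card_image_of_injective _ g.injective, Finset.card_univ, Fintype.card_fin]
    have hg : (g : Fin k → Fin n) = (Finset.image g Finset.univ).orderEmbOfFin hs :=
      Finset.orderEmbOfFin_unique hs (fun i => Finset.mem_image_of_mem _ (Finset.mem_univ i))
        g.strictMono
    apply List.ext_getElem
    · simp [Finset.length_sort, hs, hzl]
    · intro i h1 h2
      have hik : i < k := by simpa [Finset.length_sort, hs] using h1
      have h3 : ((Finset.image g Finset.univ).sort (· ≤ ·)).length = k := by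
        rw [Finset.length_sort, hs]
      rw [List.getElem_map]
      have h4 : ((Finset.image g Finset.univ).sort (· ≤ ·))[i]'(by omega) =
          (Finset.image g Finset.univ).orderEmbOfFin hs ⟨i, hik⟩ :=
        (Finset.orderEmbOfFin_apply _ hs ⟨i, hik⟩).symm
      rw [h4, ← hg]
      have h5 := hf (Fin.cast hzl.symm ⟨i, hik⟩)
      simp only [List.get_eq_getElem] at h5
      rw [List.getElem_ofFn] at h5
      simp only [g, RelEmbedding.coe_trans, Function.comp_apply]
      convert h5.symm using 2 <;> rfl

open scoped Classical in
lemma card_event_le {σ : Type*} [Fintype σ] {n k : ℕ} (s t : Finset (Fin n)) (htc : t.card = k) :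
    (Finset.univ.filter (fun p : (Fin n → σ) × (Fin n → σ) =>
        (s.sort (· ≤ ·)).map p.1 = (t.sort (· ≤ ·)).map p.2)).card ≤
      Fintype.card σ ^ n * Fintype.card σ ^ (n - k) := by
  have key : (Finset.univ.filter (fun p : (Fin n → σ) × (Fin n → σ) =>
        (s.sort (· ≤ ·)).map p.1 = (t.sort (· ≤ ·)).map p.2)).card ≤
      (Finset.univ : Finset ((Fin n → σ) × ({j : Fin n // j ∈ tᶜ} → σ))).card := by
    apply Finset.card_le_card_of_injOn
      (fun p => (p.1, fun j : {j : Fin n // j ∈ tᶜ} => p.2 j.1))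
    · intro p _; exact Finset.mem_univ _
    · rintro ⟨x, y⟩ hp ⟨x', y'⟩ hp' heq
      simp only [Prod.mk.injEq] at heq
      obtain ⟨h1, h2⟩ := heq
      subst h1
      simp only [Finset.mem_coe, Finset.mem_filter, Finset.mem_univ, true_and] at hp hp'
      have hty : (t.sort (· ≤ ·)).map y = (t.sort (· ≤ ·)).map y' := hp ▸ hp'
      have h3 : y = y' := by
        funext j
        by_cases hj : j ∈ t
        · have hmem : j ∈ t.sort (· ≤ ·) := (Finset.mem_sort _).mpr hj
          obtain ⟨i, hi⟩ := List.mem_iff_get.mp hmem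
          have hlen : i.1 < ((t.sort (· ≤ ·)).map y).length := by simpa using i.2
          have e1 : y j = ((t.sort (· ≤ ·)).map y)[i.1]'hlen := by
            rw [List.getElem_map]
            simp only [List.get_eq_getElem] at hi
            rw [hi]
          have e1' : y' j = ((t.sort (· ≤ ·)).map y')[i.1]'(by simpa using i.2) := by
            rw [List.getElem_map]
            simp only [List.get_eq_getElem] at hi
            rw [hi]
          rw [e1, e1']
          exact List.getElem_of_eq hty hlen
        · exact congrFun h2 ⟨j, Finset.mem_compl.mpr hj⟩
      simp [h3]
  rw [Finset.card_univ, Fintype.card_prod, Fintype.card_fun, Fintype.card_fun,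
    Fintype.card_fin] at key
  have hc : Fintype.card {j : Fin n // j ∈ tᶜ} = n - k := by
    rw [Fintype.card_coe, Finset.card_compl, Fintype.card_fin, htc]
  rw [hc] at key
  exact key

lemma pow_self_le_factorial_mul_exp (k : ℕ) : (k:ℝ)^k ≤ (k.factorial : ℝ) * Real.exp 1 ^ k := by
  have hsum := Real.sum_le_exp_of_nonneg (x := (k:ℝ)) (Nat.cast_nonneg k) (k+1)
  have hterm : ((k:ℝ))^k / (k.factorial : ℝ) ≤ ∑ i ∈ Finset.range (k+1), (k:ℝ)^i / i.factorial :=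
    Finset.single_le_sum (f := fun i => (k:ℝ)^i / i.factorial) (fun i _ => by positivity)
      (Finset.self_mem_range_succ k)
  have h1 : ((k:ℝ))^k / (k.factorial : ℝ) ≤ Real.exp k := hterm.trans hsum
  have hf : (0:ℝ) < (k.factorial : ℝ) := by positivity
  have hek : Real.exp ((k:ℝ)) = Real.exp 1 ^ k := by
    rw [← Real.exp_nat_mul, mul_one]
  rw [div_le_iff₀ hf, hek] at h1
  linarith [h1]

lemma numeric {q n k : ℕ} (hq : 2 ≤ q) (hk1 : 1 ≤ k) (hkn : k ≤ n) {t : ℝ}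
    (h25 : 25 * (n:ℝ)^2 ≤ (k:ℝ)^2 * q) (htk : t ≤ k) :
    (((n.choose k)^2 : ℝ) * ((q:ℝ)^n * (q:ℝ)^(n-k))) / ((q:ℝ)^n * (q:ℝ)^n) ≤ Real.exp (-t) := by
  have hq0 : (0:ℝ) < q := by positivity
  have hk0 : (0:ℝ) < k := by exact_mod_cast hk1
  have hE : (0:ℝ) < Real.exp 1 := Real.exp_pos 1
  have hc : (n.choose k : ℝ) * (k:ℝ)^k ≤ (n:ℝ)^k * Real.exp 1 ^ k := by
    have h1 : (n.choose k : ℝ) * (k.factorial : ℝ) ≤ (n:ℝ)^k := by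
      have hd := Nat.descFactorial_le_pow n k
      rw [Nat.descFactorial_eq_factorial_mul_choose] at hd
      have h2 : k.factorial * n.choose k ≤ n ^ k := hd
      calc (n.choose k : ℝ) * (k.factorial : ℝ) = ((k.factorial * n.choose k : ℕ) : ℝ) := by
            push_cast; ring
        _ ≤ ((n ^ k : ℕ) : ℝ) := by exact_mod_cast h2
        _ = (n:ℝ)^k := by push_cast; ring
    calc (n.choose k : ℝ) * (k:ℝ)^k
        ≤ (n.choose k : ℝ) * ((k.factorial : ℝ) * Real.exp 1 ^ k) :=
          mul_le_mul_of_nonneg_left (pow_self_le_factorial_mul_exp k) (by positivity)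
      _ = ((n.choose k : ℝ) * (k.factorial : ℝ)) * Real.exp 1 ^ k := by ring
      _ ≤ (n:ℝ)^k * Real.exp 1 ^ k := mul_le_mul_of_nonneg_right h1 (by positivity)
  have he3 : Real.exp 1 ^ 3 ≤ 25 := by
    have h272 : Real.exp 1 ≤ 2.72 := (Real.exp_one_lt_d9.trans (by norm_num)).le
    calc Real.exp 1 ^ 3 ≤ (2.72:ℝ) ^ 3 := pow_le_pow_left₀ hE.le h272 3
      _ ≤ 25 := by norm_num
  have hkey : ((n.choose k)^2 : ℝ) * Real.exp 1 ^ k ≤ (q:ℝ)^k := by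
    have hkk : (0:ℝ) < (k:ℝ)^(2*k) := by positivity
    rw [← mul_le_mul_iff_of_pos_right hkk]
    calc ((n.choose k)^2 : ℝ) * Real.exp 1 ^ k * (k:ℝ)^(2*k)
        = ((n.choose k : ℝ) * (k:ℝ)^k)^2 * Real.exp 1 ^ k := by ring
      _ ≤ ((n:ℝ)^k * Real.exp 1 ^ k)^2 * Real.exp 1 ^ k := by
          apply mul_le_mul_of_nonneg_right _ (by positivity)
          apply pow_le_pow_left₀ (by positivity) hc
      _ = ((n:ℝ)^2 * Real.exp 1 ^ 3)^k := by ring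
      _ ≤ ((k:ℝ)^2 * (q:ℝ))^k := by
          apply pow_le_pow_left₀ (by positivity)
          calc (n:ℝ)^2 * Real.exp 1 ^ 3 ≤ (n:ℝ)^2 * 25 :=
                mul_le_mul_of_nonneg_left he3 (by positivity)
            _ = 25 * (n:ℝ)^2 := by ring
            _ ≤ (k:ℝ)^2 * q := h25
      _ = (q:ℝ)^k * (k:ℝ)^(2*k) := by ring
  have hfrac : (((n.choose k)^2 : ℝ) * ((q:ℝ)^n * (q:ℝ)^(n-k))) / ((q:ℝ)^n * (q:ℝ)^n)
      = ((n.choose k)^2 : ℝ) / (q:ℝ)^k := by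
    have hqn : (q:ℝ)^n = (q:ℝ)^(n-k) * (q:ℝ)^k := by
      rw [← pow_add]; congr 1; omega
    rw [hqn]
    have h1 : (q:ℝ)^(n-k) ≠ 0 := by positivity
    have h2 : (q:ℝ)^k ≠ 0 := by positivity
    field_simp
  rw [hfrac]
  have hek : Real.exp ((k:ℝ)) = Real.exp 1 ^ k := by rw [← Real.exp_nat_mul, mul_one]
  have h1 : ((n.choose k)^2 : ℝ) / (q:ℝ)^k ≤ Real.exp (-(k:ℝ)) := by
    rw [Real.exp_neg, hek, div_le_iff₀ (by positivity), inv_mul_eq_div,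
      le_div_iff₀ (by positivity)]
    exact hkey
  exact h1.trans (Real.exp_le_exp.mpr (by linarith))

end Stmt3Aux

open scoped Classical in
theorem stmt3 {σ : Type*} [Fintype σ] (hσ : 2 ≤ Fintype.card σ) (n : ℕ) :
    ((Finset.univ.filter (fun p : (Fin n → σ) × (Fin n → σ) =>
        (5 * n / Real.sqrt (Fintype.card σ) : ℝ) ≤
          lcs (List.ofFn p.1) (List.ofFn p.2))).card : ℝ) /
        (Fintype.card ((Fin n → σ) × (Fin n → σ)) : ℝ) ≤
      Real.exp (-(5 * n / Real.sqrt (Fintype.card σ))) := by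
  have hq0 : (0:ℝ) < (Fintype.card σ : ℝ) := by
    have : 0 < Fintype.card σ := by omega
    exact_mod_cast this
  have hsq : (0:ℝ) < Real.sqrt (Fintype.card σ) := Real.sqrt_pos.mpr hq0
  set q := Fintype.card σ with hqdef
  set T : ℝ := 5 * n / Real.sqrt q with hTdef
  have hT0 : 0 ≤ T := by positivity
  have hNE : Nonempty σ := Fintype.card_pos_iff.mp (by omega)
  have hDpos : (0:ℝ) < (Fintype.card ((Fin n → σ) × (Fin n → σ)) : ℝ) := by
    have : 0 < Fintype.card ((Fin n → σ) × (Fin n → σ)) := Fintype.card_pos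
    exact_mod_cast this
  have hD : (Fintype.card ((Fin n → σ) × (Fin n → σ)) : ℝ) = (q:ℝ)^n * (q:ℝ)^n := by
    rw [Fintype.card_prod, Fintype.card_fun, Fintype.card_fin]
    push_cast
    ring
  rcases Nat.eq_zero_or_pos n with hn | hn
  · -- n = 0 : probability ≤ 1 = exp 0
    subst hn
    have hT : T = 0 := by rw [hTdef]; simp
    rw [hT, neg_zero, Real.exp_zero]
    rw [div_le_one hDpos]
    exact_mod_cast Finset.card_filter_le _ _
  · set k := ⌈T⌉₊ with hkdef
    have hTpos : 0 < T := by
      rw [hTdef]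
      positivity
    have hk1 : 1 ≤ k := Nat.one_le_iff_ne_zero.mpr (by
      simp only [hkdef, ne_eq, Nat.ceil_eq_zero, not_le]
      exact hTpos)
    have htk : T ≤ (k:ℝ) := Nat.le_ceil T
    rcases le_or_gt k n with hkn | hkn
    · -- main case
      have hsub : (Finset.univ.filter (fun p : (Fin n → σ) × (Fin n → σ) =>
            (T : ℝ) ≤ lcs (List.ofFn p.1) (List.ofFn p.2))) ⊆
          (Finset.powersetCard k (Finset.univ : Finset (Fin n)) ×ˢ
            Finset.powersetCard k (Finset.univ : Finset (Fin n))).biUnion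
          (fun st => Finset.univ.filter (fun p : (Fin n → σ) × (Fin n → σ) =>
            (st.1.sort (· ≤ ·)).map p.1 = (st.2.sort (· ≤ ·)).map p.2)) := by
        intro p hp
        rw [Finset.mem_filter] at hp
        obtain ⟨-, hle⟩ := hp
        have hkl : k ≤ lcs (List.ofFn p.1) (List.ofFn p.2) := Nat.ceil_le.mpr hle
        obtain ⟨z, hzl, hzx, hzy⟩ := Stmt3Aux.exists_sublist_of_le_lcs hkl
        obtain ⟨s, hs, hmaps⟩ := Stmt3Aux.map_sort_eq p.1 z hzl hzx
        obtain ⟨t', ht', hmapt⟩ := Stmt3Aux.map_sort_eq p.2 z hzl hzy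
        rw [Finset.mem_biUnion]
        refine ⟨(s, t'), ?_, ?_⟩
        · rw [Finset.mem_product]
          exact ⟨Finset.mem_powersetCard_univ.mpr hs, Finset.mem_powersetCard_univ.mpr ht'⟩
        · rw [Finset.mem_filter]
          exact ⟨Finset.mem_univ _, by rw [hmaps, hmapt]⟩
      have hcard1 : (Finset.univ.filter (fun p : (Fin n → σ) × (Fin n → σ) =>
            (T : ℝ) ≤ lcs (List.ofFn p.1) (List.ofFn p.2))).card ≤
          (n.choose k)^2 * (q^n * q^(n-k)) := by
        calc (Finset.univ.filter (fun p : (Fin n → σ) × (Fin n → σ) =>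
              (T : ℝ) ≤ lcs (List.ofFn p.1) (List.ofFn p.2))).card
            ≤ ((Finset.powersetCard k (Finset.univ : Finset (Fin n)) ×ˢ
              Finset.powersetCard k (Finset.univ : Finset (Fin n))).biUnion
              (fun st => Finset.univ.filter (fun p : (Fin n → σ) × (Fin n → σ) =>
                (st.1.sort (· ≤ ·)).map p.1 = (st.2.sort (· ≤ ·)).map p.2))).card :=
              Finset.card_le_card hsub
          _ ≤ ∑ st ∈ (Finset.powersetCard k (Finset.univ : Finset (Fin n)) ×ˢ
              Finset.powersetCard k (Finset.univ : Finset (Fin n))),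
              (Finset.univ.filter (fun p : (Fin n → σ) × (Fin n → σ) =>
                (st.1.sort (· ≤ ·)).map p.1 = (st.2.sort (· ≤ ·)).map p.2)).card :=
              Finset.card_biUnion_le
          _ ≤ (Finset.powersetCard k (Finset.univ : Finset (Fin n)) ×ˢ
              Finset.powersetCard k (Finset.univ : Finset (Fin n))).card •
                (q^n * q^(n-k)) := by
              apply Finset.sum_le_card_nsmul
              rintro ⟨s, t'⟩ hst
              rw [Finset.mem_product] at hst
              exact Stmt3Aux.card_event_le s t' (Finset.mem_powersetCard_univ.mp hst.2)
          _ = (n.choose k)^2 * (q^n * q^(n-k)) := by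
              rw [smul_eq_mul, Finset.card_product, Finset.card_powersetCard,
                Finset.card_univ, Fintype.card_fin]
              ring
      calc ((Finset.univ.filter (fun p : (Fin n → σ) × (Fin n → σ) =>
            (T : ℝ) ≤ lcs (List.ofFn p.1) (List.ofFn p.2))).card : ℝ) /
            (Fintype.card ((Fin n → σ) × (Fin n → σ)) : ℝ)
          ≤ (((n.choose k)^2 : ℝ) * ((q:ℝ)^n * (q:ℝ)^(n-k))) /
            (Fintype.card ((Fin n → σ) × (Fin n → σ)) : ℝ) := by
            gcongr
            exact_mod_cast hcard1
        _ ≤ Real.exp (-T) := by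
            rw [hD]
            apply Stmt3Aux.numeric hσ hk1 hkn ?_ htk
            have h5 : 5 * (n:ℝ) ≤ (k:ℝ) * Real.sqrt q := by
              rw [hTdef, div_le_iff₀ hsq] at htk
              linarith
            nlinarith [Real.sq_sqrt hq0.le, hsq, mul_self_le_mul_self
              (by positivity : (0:ℝ) ≤ 5 * (n:ℝ)) h5]
    · -- k > n : filter is empty
      have hempty : (Finset.univ.filter (fun p : (Fin n → σ) × (Fin n → σ) =>
            (T : ℝ) ≤ lcs (List.ofFn p.1) (List.ofFn p.2))) = ∅ := by
        rw [Finset.filter_eq_empty_iff]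
        intro p _
        intro hle
        have hkl : k ≤ lcs (List.ofFn p.1) (List.ofFn p.2) := Nat.ceil_le.mpr hle
        have hln : lcs (List.ofFn p.1) (List.ofFn p.2) ≤ n := by
          have := Stmt3Aux.lcs_le_length (List.ofFn p.1) (List.ofFn p.2)
          rwa [List.length_ofFn] at this
        omega
      rw [hempty]
      simp only [Finset.card_empty, Nat.cast_zero, zero_div]
      positivity
end

section
/- Let x,y ∈ Σ^n and B : Σ → (Σ')^{n'}, and let λ_B = max over distinct a,b ∈ Σ of lcs(B(a),B(b))/n'. Then n'·edd(x,y) - 8nn'·√λ_B ≤ edd(x ⊛ B, y ⊛ B) ≤ n'·edd(x,y). -/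
open EditDist

/-- substitution product of a string with a block map: replace each character `a` by `B a`. -/
def sprod {σ σ' : Type*} {n : ℕ} (x : Fin n → σ) (B : σ → List σ') : List σ' :=
  (List.ofFn x).flatMap B

set_option linter.unusedVariables false

namespace EditDist

variable {α : Type*}

lemma lcs_bddAbove (u v : List α) :
    BddAbove {k | ∃ z : List α, z.length = k ∧ z.Sublist u ∧ z.Sublist v} :=
  ⟨u.length, fun _ ⟨z, hz, hu, _⟩ => hz ▸ hu.length_le⟩

lemma lcs_nonempty (u v : List α) :
    Set.Nonempty {k | ∃ z : List α, z.length = k ∧ z.Sublist u ∧ z.Sublist v} :=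
  ⟨0, [], rfl, List.nil_sublist _, List.nil_sublist _⟩

lemma le_lcs {z u v : List α} (hu : z.Sublist u) (hv : z.Sublist v) : z.length ≤ lcs u v :=
  le_csSup (lcs_bddAbove u v) ⟨z, rfl, hu, hv⟩

lemma exists_lcs (u v : List α) : ∃ z : List α, z.length = lcs u v ∧ z.Sublist u ∧ z.Sublist v :=
  Nat.sSup_mem (lcs_nonempty u v) (lcs_bddAbove u v)

lemma lcs_le_length_left (u v : List α) : lcs u v ≤ u.length := by
  obtain ⟨z, hz, hu, -⟩ := exists_lcs u v; exact hz ▸ hu.length_le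

lemma lcs_le_length_right (u v : List α) : lcs u v ≤ v.length := by
  obtain ⟨z, hz, -, hv⟩ := exists_lcs u v; exact hz ▸ hv.length_le

lemma lcs_mono_left {w u v : List α} (h : w.Sublist u) : lcs w v ≤ lcs u v := by
  obtain ⟨z, hz, hw, hv⟩ := exists_lcs w v
  exact hz ▸ le_lcs (hw.trans h) hv

lemma lcs_ins_le (p s v : List α) (a : α) :
    lcs (p ++ a :: s) v ≤ lcs (p ++ s) v + 1 := by
  obtain ⟨z, hz, hw, hv⟩ := exists_lcs (p ++ a :: s) v
  rw [List.sublist_append_iff] at hw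
  obtain ⟨z1, z2, hzz, h1, h2⟩ := hw
  subst hzz
  rcases List.sublist_cons_iff.mp h2 with h2' | ⟨z2', rfl, h2'⟩
  · have : (z1 ++ z2).length ≤ lcs (p ++ s) v := le_lcs (h1.append h2') hv
    simp at this hz ⊢; omega
  · have hd : (z1 ++ z2').Sublist (z1 ++ a :: z2') :=
      (List.Sublist.refl z1).append (List.sublist_cons_self a z2')
    have : (z1 ++ z2').length ≤ lcs (p ++ s) v :=
      le_lcs (h1.append h2') (hd.trans hv)
    simp at this hz ⊢; omega

local notation "S" => (fun u v : List α => InsStep u v ∨ DelStep u v)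

lemma chain_append {R : List α → List α → Prop} {m : ℕ} {w : List α} :
    ∀ {k : ℕ} {x y : List α}, Chain R k x y → Chain R m y w → Chain R (k + m) x w := by
  intro k
  induction k with
  | zero => intro x y h h'; rw [show x = y from h]; simpa using h'
  | succ k ih =>
      rintro x y ⟨z, hz, hc⟩ h'
      rw [Nat.succ_add]
      exact ⟨z, hz, ih hc h'⟩

lemma chain_snoc {R : List α → List α → Prop} : ∀ {k : ℕ} {x y w : List α},
    Chain R k x y → R y w → Chain R (k + 1) x w
  | 0, x, y, w, h, h' => by rw [show x = y from h]; exact ⟨w, h', rfl⟩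
  | k+1, x, y, w, ⟨z, hz, hc⟩, h' => ⟨z, hz, chain_snoc hc h'⟩

lemma chain_symm {R : List α → List α → Prop} (hR : ∀ a b, R a b → R b a) :
    ∀ {k : ℕ} {x y : List α}, Chain R k x y → Chain R k y x := by
  intro k
  induction k with
  | zero => intro x y h; exact (show x = y from h) ▸ rfl
  | succ k ih =>
      rintro x y ⟨z, hz, hc⟩
      exact chain_snoc (ih hc) (hR _ _ hz)

lemma InsStep.cons_lift {u v : List α} (a : α) (h : InsStep u v) : InsStep (a::u) (a::v) := by
  obtain ⟨p, s, b, rfl, rfl⟩ := h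
  exact ⟨a :: p, s, b, rfl, rfl⟩

lemma chain_cons_lift (a : α) : ∀ {k : ℕ} {u v : List α},
    Chain S k u v → Chain S k (a :: u) (a :: v) := by
  intro k
  induction k with
  | zero => intro u v h; rw [show u = v from h]; rfl
  | succ k ih =>
      rintro u v ⟨z, hz, hc⟩
      exact ⟨a :: z, hz.imp (.cons_lift a) (.cons_lift a), ih hc⟩

lemma chain_del_of_sublist {z u : List α} (h : z.Sublist u) :
    Chain S (u.length - z.length) u z := by
  induction h with
  | slnil => rfl
  | @cons l₁ l₂ a h ih =>
      have hlen : l₁.length ≤ l₂.length := h.length_le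
      have he : (a :: l₂).length - l₁.length = (l₂.length - l₁.length) + 1 := by
        simp; omega
      rw [he]
      exact ⟨l₂, Or.inr ⟨[], l₂, a, rfl, rfl⟩, ih⟩
  | @cons_cons l₁ l₂ a h ih =>
      have he : (a :: l₂).length - (a :: l₁).length = l₂.length - l₁.length := by simp
      rw [he]
      exact chain_cons_lift a ih

lemma S_symm : ∀ a b : List α, (InsStep a b ∨ DelStep a b) → (InsStep b a ∨ DelStep b a) :=
  fun _ _ h => h.elim (fun h => Or.inr h) (fun h => Or.inl h)

lemma chain_of_sublists {z u v : List α} (hu : z.Sublist u) (hv : z.Sublist v) :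
    Chain S (u.length + v.length - 2 * z.length) u v := by
  have h1 := chain_del_of_sublist hu
  have h2 : Chain S (v.length - z.length) z v := chain_symm S_symm (chain_del_of_sublist hv)
  have := chain_append h1 h2
  have he : u.length - z.length + (v.length - z.length) = u.length + v.length - 2 * z.length := by
    have := hu.length_le; have := hv.length_le; omega
  rwa [he] at this

lemma edd_set_nonempty (u v : List α) :
    Set.Nonempty {k | Chain S k u v} := by
  have := chain_of_sublists (List.nil_sublist u) (List.nil_sublist v)
  exact ⟨_, this⟩

lemma edd_le_of_sublists {z u v : List α} (hu : z.Sublist u) (hv : z.Sublist v) :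
    edd u v ≤ u.length + v.length - 2 * z.length :=
  Nat.sInf_le (chain_of_sublists hu hv)

lemma length_le_chain : ∀ (k : ℕ) (u v : List α), Chain S k u v →
    u.length + v.length ≤ k + 2 * lcs u v := by
  intro k
  induction k with
  | zero =>
      intro u v h
      rw [show u = v from h]
      have := le_lcs (List.Sublist.refl v) (List.Sublist.refl v)
      omega
  | succ k ih =>
      rintro u v ⟨w, hw, hc⟩
      have h2 := ih w v hc
      rcases hw with ⟨p, s, a, rfl, rfl⟩ | ⟨p, s, a, hps, rfl⟩
      · -- Ins : u = p++s, w = p++a::s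
        have hl : lcs (p ++ a :: s) v ≤ lcs (p ++ s) v + 1 := lcs_ins_le p s v a
        simp only [List.length_append, List.length_cons] at h2 ⊢
        omega
      · -- Del : u = p++a::s, w = p++s
        subst hps
        have hl : lcs (p ++ s) v ≤ lcs (p ++ a :: s) v :=
          lcs_mono_left ((List.Sublist.refl p).append (List.sublist_cons_self a s))
        simp only [List.length_append, List.length_cons] at h2 ⊢
        omega

lemma edd_add_lcs (u v : List α) : edd u v + 2 * lcs u v = u.length + v.length := by
  obtain ⟨z, hz, hu, hv⟩ := exists_lcs u v
  have h1 : edd u v ≤ u.length + v.length - 2 * z.length := edd_le_of_sublists hu hv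
  have h2 := length_le_chain (edd u v) u v (Nat.sInf_mem (edd_set_nonempty u v))
  have := hu.length_le; have := hv.length_le
  omega


end EditDist

namespace StmtAux

open EditDist

variable {σ σ' : Type*}

lemma sublist_flatMap {B : σ → List σ'} {z w : List σ} (h : z.Sublist w) :
    (z.flatMap B).Sublist (w.flatMap B) := by
  induction h with
  | slnil => exact List.Sublist.refl _
  | @cons l₁ l₂ a h ih =>
      rw [List.flatMap_cons]
      exact ih.trans (List.sublist_append_right _ _)
  | @cons_cons l₁ l₂ a h ih =>
      rw [List.flatMap_cons, List.flatMap_cons]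
      exact ih.append_left _

lemma length_flatMap_const {B : σ → List σ'} {n' : ℕ} (hB : ∀ a, (B a).length = n')
    (l : List σ) : (l.flatMap B).length = l.length * n' := by
  rw [List.length_flatMap]
  induction l with
  | nil => simp
  | cons c t ih => simp [ih, hB c]; ring

lemma getElem?_flatMap_const {B : σ → List σ'} {n' : ℕ} (hB : ∀ a, (B a).length = n')
    (hn' : 0 < n') :
    ∀ (l : List σ) (q : ℕ), q < l.length * n' →
      (l.flatMap B)[q]? = l[q / n']?.bind (fun c => (B c)[q % n']?) := by
  intro l
  induction l with
  | nil => intro q hq; simp at hq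
  | cons c t ih =>
      intro q hq
      rw [List.flatMap_cons, List.getElem?_append]
      by_cases h : q < n'
      · rw [if_pos (by rwa [hB])]
        rw [Nat.div_eq_of_lt h, Nat.mod_eq_of_lt h]
        simp
      · push_neg at h
        rw [if_neg (by rw [hB]; omega)]
        obtain ⟨r, rfl⟩ : ∃ r, q = r + n' := ⟨q - n', by omega⟩
        rw [hB]
        have hq' : r < t.length * n' := by
          simp only [List.length_cons] at hq
          have : (t.length + 1) * n' = t.length * n' + n' := by ring
          omega
        rw [Nat.add_sub_cancel, ih r hq', Nat.add_div_right _ hn', Nat.add_mod_right]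
        rw [List.getElem?_cons_succ]

lemma getElem_flatMap_const {B : σ → List σ'} {n' : ℕ} (hB : ∀ a, (B a).length = n')
    (hn' : 0 < n') (l : List σ) (q : ℕ) (hq : q < l.length * n') :
    (l.flatMap B)[q]'(by rwa [length_flatMap_const hB]) =
      (B (l[q / n']'(Nat.div_lt_of_lt_mul (by rwa [Nat.mul_comm]))))[q % n']'
        (by rw [hB]; exact Nat.mod_lt _ hn') := by
  have h1 := getElem?_flatMap_const hB hn' l q hq
  rw [List.getElem?_eq_getElem (by rwa [length_flatMap_const hB]),
      List.getElem?_eq_getElem (show q / n' < l.length from Nat.div_lt_of_lt_mul (by rwa [Nat.mul_comm]))] at h1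
  simp only [Option.bind_some] at h1
  rw [List.getElem?_eq_getElem (by rw [hB]; exact Nat.mod_lt _ hn')] at h1
  exact Option.some.inj h1


def Rw (c d : ℕ × ℕ) : Prop := c.1 ≤ d.1 ∧ c.2 ≤ d.2
def Rs (c d : ℕ × ℕ) : Prop := c.1 < d.1 ∧ c.2 < d.2

lemma line_split {a b : ℕ} : ∀ (g : List (ℕ × ℕ)),
    g.Pairwise Rw → (∀ e ∈ g, (e.1 = a ∨ e.2 = b) ∧ a ≤ e.1 ∧ b ≤ e.2) →
    (∀ e ∈ g, e.1 = a) ∨ (∀ e ∈ g, e.2 = b) := by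
  intro g
  induction g with
  | nil => intro _ _; exact Or.inl (by simp)
  | cons d g' ih =>
      intro hp hmem
      rw [List.pairwise_cons] at hp
      obtain ⟨hd1, hp'⟩ := hp
      obtain ⟨hor, ha, hb⟩ := hmem d (by simp)
      by_cases h1 : d.1 = a
      · by_cases h2 : d.2 = b
        · rcases ih hp' (fun e he => hmem e (List.mem_cons_of_mem d he)) with h | h
          · refine Or.inl ?_
            intro e he
            rcases List.mem_cons.mp he with rfl | he
            · exact h1
            · exact h e he
          · refine Or.inr ?_
            intro e he
            rcases List.mem_cons.mp he with rfl | he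
            · exact h2
            · exact h e he
        · refine Or.inl ?_
          intro e he
          rcases List.mem_cons.mp he with rfl | he
          · exact h1
          · have hle := hd1 e he
            have hb2 : b < d.2 := lt_of_le_of_ne hb (Ne.symm h2)
            rcases (hmem e (List.mem_cons_of_mem d he)).1 with h | h
            · exact h
            · exfalso; have := hle.2; omega
      · have h2 : d.2 = b := hor.resolve_left h1
        refine Or.inr ?_
        intro e he
        rcases List.mem_cons.mp he with rfl | he
        · exact h2
        · have hle := hd1 e he
          have ha1 : a < d.1 := lt_of_le_of_ne ha (Ne.symm h1)
          rcases (hmem e (List.mem_cons_of_mem d he)).1 with h | h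
          · exfalso; have := hle.1; omega
          · exact h


lemma greedy {K : ℕ} (hK : 1 ≤ K) :
    ∀ (N : ℕ) (l : List (ℕ × ℕ)), l.length ≤ N →
      l.Pairwise Rw →
      (∀ a, l.countP (fun d => d.1 == a) ≤ K) →
      (∀ b, l.countP (fun d => d.2 == b) ≤ K) →
      ∃ C : List (ℕ × ℕ), (∀ e ∈ C, e ∈ l) ∧ C.Pairwise Rs ∧
        l.length ≤ K * C.length := by
  intro N
  induction N with
  | zero =>
      intro l hl _ _ _
      refine ⟨[], by simp, by simp, ?_⟩
      simp only [List.length_nil, Nat.mul_zero]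
      omega
  | succ N ih =>
      intro l hl hp hrow hcol
      match l with
      | [] => exact ⟨[], by simp, by simp, by simp⟩
      | c :: rest =>
          rw [List.pairwise_cons] at hp
          obtain ⟨hcrest, hprest⟩ := hp
          obtain ⟨grp, rest', hsplit, hgrpP, hheadP⟩ :
              ∃ g r : List (ℕ × ℕ), g ++ r = rest ∧
                (∀ e ∈ g, (fun d : ℕ × ℕ => d.1 == c.1 || d.2 == c.2) e = true) ∧
                (∀ w : r ≠ [], (fun d : ℕ × ℕ => d.1 == c.1 || d.2 == c.2) (r.head w) = false) :=
            ⟨List.takeWhile (fun d : ℕ × ℕ => d.1 == c.1 || d.2 == c.2) rest,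
              List.dropWhile (fun d : ℕ × ℕ => d.1 == c.1 || d.2 == c.2) rest,
              List.takeWhile_append_dropWhile,
              fun e he => by exact List.mem_takeWhile_imp (p := fun d : ℕ × ℕ => d.1 == c.1 || d.2 == c.2) (l := rest) he,
              fun w => List.head_dropWhile_not (fun d : ℕ × ℕ => d.1 == c.1 || d.2 == c.2) (l := rest) w⟩
          have hgrp_sub : grp.Sublist rest := hsplit ▸ List.sublist_append_left _ _
          have hrest'_sub : rest'.Sublist rest := hsplit ▸ List.sublist_append_right _ _
          have hgrp_mem : ∀ e ∈ grp, (e.1 = c.1 ∨ e.2 = c.2) ∧ c.1 ≤ e.1 ∧ c.2 ≤ e.2 := by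
            intro e he
            have hpe := hgrpP e he
            have := hcrest e (hgrp_sub.mem he)
            refine ⟨?_, this⟩
            simpa using hpe
          have hline := line_split grp (hprest.sublist hgrp_sub) hgrp_mem
          have hcg_sub : (c :: grp).Sublist (c :: rest) := hgrp_sub.cons₂ c
          have hgrplen : grp.length + 1 ≤ K := by
            have hlen' : (c :: grp).length = grp.length + 1 := by simp
            rcases hline with h | h
            · have hfull : (c :: grp).countP (fun d => d.1 == c.1) = (c :: grp).length :=
                List.countP_eq_length.mpr (by
                  intro e he
                  rcases List.mem_cons.mp he with rfl | he
                  · simp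
                  · simp [h e he])
              have hle := hcg_sub.countP_le (p := fun d => d.1 == c.1)
              rw [hfull, hlen'] at hle
              have := hrow c.1
              omega
            · have hfull : (c :: grp).countP (fun d => d.2 == c.2) = (c :: grp).length :=
                List.countP_eq_length.mpr (by
                  intro e he
                  rcases List.mem_cons.mp he with rfl | he
                  · simp
                  · simp [h e he])
              have hle := hcg_sub.countP_le (p := fun d => d.2 == c.2)
              rw [hfull, hlen'] at hle
              have := hcol c.2
              omega
          have hrest'_subl : rest'.Sublist (c :: rest) :=
            hrest'_sub.trans (List.sublist_cons_self c rest)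
          have hlensplit : grp.length + rest'.length = rest.length := by
            have := congrArg List.length hsplit
            simpa using this
          have hrest'_len : rest'.length ≤ N := by
            simp only [List.length_cons] at hl
            omega
          have hstrict : ∀ e ∈ rest', c.1 < e.1 ∧ c.2 < e.2 := by
            cases rest' with
            | nil => intro e he; simp at he
            | cons hd tl =>
                intro e he
                have hhd : (hd.1 == c.1 || hd.2 == c.2) = false := hheadP (by simp)
                have hhd' : hd.1 ≠ c.1 ∧ hd.2 ≠ c.2 := by simpa using hhd
                have hchd := hcrest hd (hrest'_sub.mem (List.mem_cons_self (a := hd) (l := tl)))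
                have hhdc : c.1 < hd.1 ∧ c.2 < hd.2 :=
                  ⟨lt_of_le_of_ne hchd.1 (Ne.symm hhd'.1), lt_of_le_of_ne hchd.2 (Ne.symm hhd'.2)⟩
                have hprest' := hprest.sublist hrest'_sub
                rw [List.pairwise_cons] at hprest'
                rcases List.mem_cons.mp he with rfl | he'
                · exact hhdc
                · have := hprest'.1 e he'
                  exact ⟨lt_of_lt_of_le hhdc.1 this.1, lt_of_lt_of_le hhdc.2 this.2⟩
          obtain ⟨C', hC'mem, hC'p, hC'len⟩ := ih rest' hrest'_len (hprest.sublist hrest'_sub)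
            (fun a => le_trans (hrest'_subl.countP_le) (hrow a))
            (fun b => le_trans (hrest'_subl.countP_le) (hcol b))
          refine ⟨c :: C', ?_, ?_, ?_⟩
          · intro e he
            rcases List.mem_cons.mp he with rfl | he
            · exact List.mem_cons_self
            · exact List.mem_cons_of_mem c (hrest'_sub.mem (hC'mem e he))
          · rw [List.pairwise_cons]
            exact ⟨fun e he => hstrict e (hC'mem e he), hC'p⟩
          · have hmul : K * (c :: C').length = K * C'.length + K := by
              simp [List.length_cons]; ring
            rw [hmul]
            simp only [List.length_cons]
            omega


lemma length_le_of_sorted_lt {l : List ℕ} {m : ℕ} (hp : l.Pairwise (· < ·))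
    (hm : ∀ e ∈ l, e < m) : l.length ≤ m := by
  have hnd : l.Nodup := hp.imp Nat.ne_of_lt
  have h1 : l.toFinset.card = l.length := List.toFinset_card_of_nodup hnd
  have h2 : l.toFinset ⊆ Finset.range m := by
    intro e he; rw [List.mem_toFinset] at he; exact Finset.mem_range.mpr (hm e he)
  have := Finset.card_le_card h2
  rw [h1, Finset.card_range] at this
  exact this

lemma exists_common_of_matching {σ' : Type*} :
    ∀ (N : ℕ) (m : List (ℕ × ℕ)) (A C : List σ'), m.length ≤ N →
      m.Pairwise (fun p q => p.1 < q.1 ∧ p.2 < q.2) →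
      (∀ p ∈ m, ∃ (h1 : p.1 < A.length) (h2 : p.2 < C.length), A[p.1] = C[p.2]) →
      ∃ w : List σ', w.length = m.length ∧ w.Sublist A ∧ w.Sublist C := by
  intro N
  induction N with
  | zero =>
      intro m A C hm _ _
      have hm0 : m = [] := List.length_eq_zero_iff.mp (Nat.le_zero.mp hm)
      subst hm0
      exact ⟨[], rfl, List.nil_sublist _, List.nil_sublist _⟩
  | succ N ih =>
      intro m A C hm hp hmem
      match m with
      | [] => exact ⟨[], rfl, List.nil_sublist _, List.nil_sublist _⟩
      | p :: m' =>
          obtain ⟨h1, h2, hchar⟩ := hmem p (List.mem_cons_self)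
          rw [List.pairwise_cons] at hp
          obtain ⟨hpfst, hp'⟩ := hp
          have hlen' : (m'.map (fun q : ℕ × ℕ => (q.1 - (p.1+1), q.2 - (p.2+1)))).length ≤ N := by
            simp only [List.length_map]
            simp only [List.length_cons] at hm
            omega
          have hpair' : (m'.map (fun q : ℕ × ℕ => (q.1 - (p.1+1), q.2 - (p.2+1)))).Pairwise
              (fun p q => p.1 < q.1 ∧ p.2 < q.2) := by
            rw [List.pairwise_map]
            refine hp'.imp_of_mem ?_
            intro q r hq hr hqr
            have hq1 := hpfst q hq
            have hr1 := hpfst r hr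
            simp only
            omega
          have hmem' : ∀ q ∈ m'.map (fun q : ℕ × ℕ => (q.1 - (p.1+1), q.2 - (p.2+1))),
              ∃ (h1 : q.1 < (A.drop (p.1+1)).length) (h2 : q.2 < (C.drop (p.2+1)).length),
                (A.drop (p.1+1))[q.1] = (C.drop (p.2+1))[q.2] := by
            intro q hq
            rw [List.mem_map] at hq
            obtain ⟨r, hr, rfl⟩ := hq
            obtain ⟨hr1, hr2, hrc⟩ := hmem r (List.mem_cons_of_mem p hr)
            have hpr := hpfst r hr
            have hq1 : r.1 - (p.1+1) < (A.drop (p.1+1)).length := by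
              rw [List.length_drop]; omega
            have hq2 : r.2 - (p.2+1) < (C.drop (p.2+1)).length := by
              rw [List.length_drop]; omega
            refine ⟨hq1, hq2, ?_⟩
            rw [List.getElem_drop, List.getElem_drop]
            have e1 : p.1 + 1 + (r.1 - (p.1+1)) = r.1 := by omega
            have e2 : p.2 + 1 + (r.2 - (p.2+1)) = r.2 := by omega
            simp only [e1, e2]
            exact hrc
          obtain ⟨w', hw'len, hw'A, hw'C⟩ := ih _ (A.drop (p.1+1)) (C.drop (p.2+1))
            hlen' hpair' hmem'
          refine ⟨A[p.1] :: w', ?_, ?_, ?_⟩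
          · simp only [List.length_cons, List.length_map] at hw'len ⊢
            rw [hw'len]
          · have hmem1 : A[p.1] ∈ A.take (p.1+1) := by
              have ht : p.1 < (A.take (p.1+1)).length := by
                rw [List.length_take]; omega
              have := List.getElem_take (xs := A) (j := p.1+1) (i := p.1) (h := ht)
              rw [← this]
              exact List.getElem_mem ht
            have hs1 : [A[p.1]].Sublist (A.take (p.1+1)) := List.singleton_sublist.mpr hmem1
            have := hs1.append hw'A
            rwa [List.take_append_drop] at this
          · have hmem1 : C[p.2] ∈ C.take (p.2+1) := by
              have ht : p.2 < (C.take (p.2+1)).length := by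
                rw [List.length_take]; omega
              have := List.getElem_take (xs := C) (j := p.2+1) (i := p.2) (h := ht)
              rw [← this]
              exact List.getElem_mem ht
            have hs1 : [A[p.1]].Sublist (C.take (p.2+1)) := by
              rw [hchar]; exact List.singleton_sublist.mpr hmem1
            have := hs1.append hw'C
            rwa [List.take_append_drop] at this



section Key

variable {σ σ' : Type*} {n n' : ℕ}

lemma key (x y : Fin n → σ) (B : σ → List σ')
    (hB : ∀ a, (B a).length = n') (hn' : 0 < n')
    (lam : ℝ) (hlam0 : 0 ≤ lam)
    (hlam : ∀ a b : σ, a ≠ b → (lcs (B a) (B b) : ℝ) ≤ lam * n') :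
    (lcs ((List.ofFn x).flatMap B) ((List.ofFn y).flatMap B) : ℝ) ≤
      n' * lcs (List.ofFn x) (List.ofFn y) + 2 * n * (lam * n') := by
  classical
  obtain ⟨z, hzlen, hzu, hzv⟩ := exists_lcs ((List.ofFn x).flatMap B) ((List.ofFn y).flatMap B)
  obtain ⟨f, hf⟩ := List.sublist_iff_exists_fin_orderEmbedding_get_eq.mp hzu
  obtain ⟨g, hg⟩ := List.sublist_iff_exists_fin_orderEmbedding_get_eq.mp hzv
  have hu_len : ((List.ofFn x).flatMap B).length = n * n' := by
    rw [length_flatMap_const hB, List.length_ofFn]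
  have hv_len : ((List.ofFn y).flatMap B).length = n * n' := by
    rw [length_flatMap_const hB, List.length_ofFn]
  have hmodB : ∀ (q : ℕ) (c : σ), q % n' < (B c).length := fun q c => by
    rw [hB]; exact Nat.mod_lt _ hn'
  obtain ⟨F, G, hF_mono, hG_mono, hchar⟩ :
      ∃ F G : Fin z.length → ℕ,
        (∀ i j : Fin z.length, i < j → F i < F j) ∧
        (∀ i j : Fin z.length, i < j → G i < G j) ∧
        (∀ i, ∃ (hFd : F i / n' < n) (hGd : G i / n' < n),
          z.get i = (B (x ⟨F i / n', hFd⟩))[F i % n']'(hmodB _ _) ∧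
          z.get i = (B (y ⟨G i / n', hGd⟩))[G i % n']'(hmodB _ _)) := by
    refine ⟨fun i => (f i : ℕ), fun i => (g i : ℕ), fun i j h => f.strictMono h,
      fun i j h => g.strictMono h, ?_⟩
    intro i
    have hF_lt : (f i : ℕ) < n * n' := hu_len ▸ (f i).isLt
    have hG_lt : (g i : ℕ) < n * n' := hv_len ▸ (g i).isLt
    refine ⟨Nat.div_lt_of_lt_mul (by rw [Nat.mul_comm]; exact hF_lt),
            Nat.div_lt_of_lt_mul (by rw [Nat.mul_comm]; exact hG_lt), ?_, ?_⟩
    · rw [hf i]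
      have h0 : (f i : ℕ) < (List.ofFn x).length * n' := by
        rw [List.length_ofFn]; exact hF_lt
      have h := getElem_flatMap_const hB hn' (List.ofFn x) (f i : ℕ) h0
      simp only [List.getElem_ofFn] at h
      rw [List.get_eq_getElem]
      exact h
    · rw [hg i]
      have h0 : (g i : ℕ) < (List.ofFn y).length * n' := by
        rw [List.length_ofFn]; exact hG_lt
      have h := getElem_flatMap_const hB hn' (List.ofFn y) (g i : ℕ) h0
      simp only [List.getElem_ofFn] at h
      rw [List.get_eq_getElem]
      exact h
  have hFd_lt : ∀ i, F i / n' < n := fun i => by obtain ⟨h, -, -⟩ := hchar i; exact h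
  have hGd_lt : ∀ i, G i / n' < n := fun i => by obtain ⟨-, h, -⟩ := hchar i; exact h
  have hcharu : ∀ i, z.get i = (B (x ⟨F i / n', hFd_lt i⟩))[F i % n']'(hmodB _ _) := by
    intro i; obtain ⟨h1, h2, hc, -⟩ := hchar i; exact hc
  have hcharv : ∀ i, z.get i = (B (y ⟨G i / n', hGd_lt i⟩))[G i % n']'(hmodB _ _) := by
    intro i; obtain ⟨h1, h2, -, hc⟩ := hchar i; exact hc
  set cell : Fin z.length → ℕ × ℕ := fun i => (F i / n', G i / n') with hcelldef
  set M : List (ℕ × ℕ) := (List.finRange z.length).map cell with hMdef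
  have hMlen : M.length = z.length := by simp [hMdef]
  have hMpair : M.Pairwise Rw := by
    rw [hMdef, List.pairwise_map]
    refine (List.pairwise_lt_finRange z.length).imp ?_
    intro i j hij
    exact ⟨Nat.div_le_div_right (le_of_lt (hF_mono i j hij)),
      Nat.div_le_div_right (le_of_lt (hG_mono i j hij))⟩
  have hMmem_lt : ∀ d ∈ M, d.1 < n ∧ d.2 < n := by
    intro d hd
    rw [hMdef, List.mem_map] at hd
    obtain ⟨i, -, rfl⟩ := hd
    exact ⟨hFd_lt i, hGd_lt i⟩
  -- row and column count bounds
  have hrow : ∀ a, M.countP (fun d => d.1 == a) ≤ n' := by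
    intro a
    rw [hMdef, List.countP_map, List.countP_eq_length_filter]
    set idx := (List.finRange z.length).filter ((fun d : ℕ × ℕ => d.1 == a) ∘ cell) with hidx
    have hidx_pair : idx.Pairwise (· < ·) :=
      (List.pairwise_lt_finRange z.length).sublist (List.filter_sublist)
    have hdiv : ∀ i ∈ idx, F i / n' = a := by
      intro i hi
      have := List.of_mem_filter hi
      simpa [hcelldef] using this
    have hp : (idx.map fun i => F i % n').Pairwise (· < ·) := by
      rw [List.pairwise_map]
      refine hidx_pair.imp_of_mem ?_
      intro i j hi hj hij
      have hdi := hdiv i hi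
      have hdj := hdiv j hj
      have hFij := hF_mono i j hij
      have d1 := Nat.div_add_mod (F i) n'
      have d2 := Nat.div_add_mod (F j) n'
      rw [hdi] at d1
      rw [hdj] at d2
      omega
    have hlt : ∀ e ∈ idx.map fun i => F i % n', e < n' := by
      intro e he
      rw [List.mem_map] at he
      obtain ⟨i, -, rfl⟩ := he
      exact Nat.mod_lt _ hn'
    have := length_le_of_sorted_lt hp hlt
    simpa using this
  have hcol : ∀ b, M.countP (fun d => d.2 == b) ≤ n' := by
    intro b
    rw [hMdef, List.countP_map, List.countP_eq_length_filter]
    set idx := (List.finRange z.length).filter ((fun d : ℕ × ℕ => d.2 == b) ∘ cell) with hidx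
    have hidx_pair : idx.Pairwise (· < ·) :=
      (List.pairwise_lt_finRange z.length).sublist (List.filter_sublist)
    have hdiv : ∀ i ∈ idx, G i / n' = b := by
      intro i hi
      have := List.of_mem_filter hi
      simpa [hcelldef] using this
    have hp : (idx.map fun i => G i % n').Pairwise (· < ·) := by
      rw [List.pairwise_map]
      refine hidx_pair.imp_of_mem ?_
      intro i j hi hj hij
      have hdi := hdiv i hi
      have hdj := hdiv j hj
      have hGij := hG_mono i j hij
      have d1 := Nat.div_add_mod (G i) n'
      have d2 := Nat.div_add_mod (G j) n'
      rw [hdi] at d1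
      rw [hdj] at d2
      omega
    have hlt : ∀ e ∈ idx.map fun i => G i % n', e < n' := by
      intro e he
      rw [List.mem_map] at he
      obtain ⟨i, -, rfl⟩ := he
      exact Nat.mod_lt _ hn'
    have := length_le_of_sorted_lt hp hlt
    simpa using this
  -- split into equal-character and different-character cells
  set PB : ℕ × ℕ → Bool :=
    fun d => decide (∃ (h1 : d.1 < n) (h2 : d.2 < n), x ⟨d.1, h1⟩ = y ⟨d.2, h2⟩) with hPBdef
  set ME := M.filter PB with hMEdef
  set MD := M.filter (fun d => !(PB d)) with hMDdef
  have hsplitlen : ME.length + MD.length = M.length := by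
    have h := List.length_eq_countP_add_countP PB (l := M)
    rw [List.countP_eq_length_filter, List.countP_eq_length_filter] at h
    have he : M.filter (fun a => decide ¬PB a = true) = M.filter (fun d => !(PB d)) := by
      apply List.filter_congr
      intro d _
      by_cases h : PB d <;> simp [h]
    rw [he] at h
    rw [← hMEdef, ← hMDdef] at h
    omega
  -- bound on the different-character part
  have hD : (MD.length : ℝ) ≤ 2 * n * (lam * n') := by
    rw [← List.sum_toFinset_count_eq_length MD]
    push_cast
    have hcc : ∀ (d : ℕ × ℕ) (l : List (ℕ × ℕ)),
        @List.count _ instBEqOfDecidableEq d l = @List.count _ instBEqProd d l := by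
      intro d l
      rw [@List.count_eq_countP _ instBEqOfDecidableEq, @List.count_eq_countP _ instBEqProd]
      apply List.countP_congr
      intro a _
      show (decide (a = d) = true) ↔ ((a.1 == d.1 && a.2 == d.2) = true)
      simp [Prod.ext_iff]
    simp only [hcc]
    have hMDpair : MD.Pairwise Rw := hMpair.sublist (List.filter_sublist)
    have hcard : MD.toFinset.card ≤ 2 * n := by
      have hinj : Set.InjOn (fun d : ℕ × ℕ => d.1 + d.2) MD.toFinset := by
        intro d hd e he hde
        simp only [Finset.coe_sort_coe, List.mem_toFinset, Finset.mem_coe] at hd he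
        dsimp only at hde
        by_contra hne
        have hpair2 : MD.Pairwise (fun c d : ℕ × ℕ => Rw c d ∨ Rw d c) :=
          hMDpair.imp (fun h => Or.inl h)
        have hsym : Symmetric (fun c d : ℕ × ℕ => Rw c d ∨ Rw d c) :=
          fun a b h => h.symm
        haveI : Std.Symm (fun c d : ℕ × ℕ => Rw c d ∨ Rw d c) := ⟨fun a b h => hsym h⟩
        have hcomp := hpair2.forall hd he hne
        rcases hcomp with ⟨ha, hb⟩ | ⟨ha, hb⟩
        · exact hne (Prod.ext_iff.mpr ⟨by omega, by omega⟩)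
        · exact hne (Prod.ext_iff.mpr ⟨by omega, by omega⟩)
      have hmapsto : ∀ d ∈ MD.toFinset, (fun d : ℕ × ℕ => d.1 + d.2) d ∈ Finset.range (2 * n) := by
        intro d hd
        rw [List.mem_toFinset] at hd
        have hdM : d ∈ M := (List.filter_sublist (l := M)).mem hd
        obtain ⟨h1, h2⟩ := hMmem_lt d hdM
        simp only [Finset.mem_range]
        omega
      have := Finset.card_le_card_of_injOn _ hmapsto hinj
      simpa using this
    have hcount : ∀ d ∈ MD.toFinset, (MD.count d : ℝ) ≤ lam * n' := by
      intro d hd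
      rw [List.mem_toFinset] at hd
      have hdM : d ∈ M := (List.filter_sublist (l := M)).mem hd
      obtain ⟨hd1, hd2⟩ := hMmem_lt d hdM
      have hPBf : PB d = false := by
        have := (List.mem_filter.mp hd).2
        simpa using this
      have hne : x ⟨d.1, hd1⟩ ≠ y ⟨d.2, hd2⟩ := by
        intro hcontra
        have : PB d = true := by
          rw [hPBdef]
          exact decide_eq_true ⟨hd1, hd2, hcontra⟩
        rw [hPBf] at this
        exact Bool.false_ne_true this
      have hc1 : MD.count d ≤ M.count d := (List.filter_sublist (l := M)).count_le d
      have hc2 : M.count d ≤ lcs (B (x ⟨d.1, hd1⟩)) (B (y ⟨d.2, hd2⟩)) := by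
        rw [List.count_eq_countP, hMdef, List.countP_map, List.countP_eq_length_filter]
        set idx := (List.finRange z.length).filter ((fun e : ℕ × ℕ => e == d) ∘ cell) with hidx
        have hidx_pair : idx.Pairwise (· < ·) :=
          (List.pairwise_lt_finRange z.length).sublist (List.filter_sublist)
        have hcelli : ∀ i ∈ idx, F i / n' = d.1 ∧ G i / n' = d.2 := by
          intro i hi
          have := List.of_mem_filter hi
          have h2 : cell i = d := by simpa using this
          rw [hcelldef] at h2
          exact ⟨congrArg Prod.fst h2, congrArg Prod.snd h2⟩
        have hmmpair : (idx.map (fun i => (F i % n', G i % n'))).Pairwise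
            (fun p q : ℕ × ℕ => p.1 < q.1 ∧ p.2 < q.2) := by
          rw [List.pairwise_map]
          refine hidx_pair.imp_of_mem ?_
          intro i j hi hj hij
          obtain ⟨hdi1, hdi2⟩ := hcelli i hi
          obtain ⟨hdj1, hdj2⟩ := hcelli j hj
          have hFij := hF_mono i j hij
          have hGij := hG_mono i j hij
          have d1 := Nat.div_add_mod (F i) n'
          have d2 := Nat.div_add_mod (F j) n'
          have d3 := Nat.div_add_mod (G i) n'
          have d4 := Nat.div_add_mod (G j) n'
          rw [hdi1] at d1; rw [hdj1] at d2; rw [hdi2] at d3; rw [hdj2] at d4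
          exact ⟨by omega, by omega⟩
        have hmmmem : ∀ p ∈ idx.map (fun i => (F i % n', G i % n')),
            ∃ (h1 : p.1 < (B (x ⟨d.1, hd1⟩)).length)
            (h2 : p.2 < (B (y ⟨d.2, hd2⟩)).length),
              (B (x ⟨d.1, hd1⟩))[p.1] = (B (y ⟨d.2, hd2⟩))[p.2] := by
          intro p hp
          rw [List.mem_map] at hp
          obtain ⟨i, hi, rfl⟩ := hp
          obtain ⟨hdi1, hdi2⟩ := hcelli i hi
          have e1 : (⟨F i / n', hFd_lt i⟩ : Fin n) = ⟨d.1, hd1⟩ := Fin.ext hdi1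
          have e2 : (⟨G i / n', hGd_lt i⟩ : Fin n) = ⟨d.2, hd2⟩ := Fin.ext hdi2
          have hcu := hcharu i
          have hcv := hcharv i
          simp only [e1] at hcu
          simp only [e2] at hcv
          exact ⟨hmodB _ _, hmodB _ _, by rw [← hcu, ← hcv]⟩
        obtain ⟨w, hwlen, hwA, hwC⟩ := exists_common_of_matching
          (idx.map (fun i => (F i % n', G i % n'))).length
          (idx.map (fun i => (F i % n', G i % n')))
          (B (x ⟨d.1, hd1⟩)) (B (y ⟨d.2, hd2⟩)) le_rfl hmmpair hmmmem
        have := le_lcs hwA hwC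
        rw [hwlen, List.length_map] at this
        exact this
      have hlcs := hlam _ _ hne
      have : (MD.count d : ℝ) ≤ (lcs (B (x ⟨d.1, hd1⟩)) (B (y ⟨d.2, hd2⟩)) : ℝ) := by
        exact_mod_cast le_trans hc1 hc2
      linarith
    have hsum := Finset.sum_le_sum hcount
    rw [Finset.sum_const, nsmul_eq_mul] at hsum
    refine le_trans hsum ?_
    have h1 : (MD.toFinset.card : ℝ) ≤ 2 * n := by exact_mod_cast hcard
    have h2 : (0:ℝ) ≤ lam * n' := mul_nonneg hlam0 (by positivity)
    exact mul_le_mul_of_nonneg_right h1 h2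
  -- bound on the equal-character part via the greedy chain lemma
  have hMEpair : ME.Pairwise Rw := hMpair.sublist (List.filter_sublist)
  obtain ⟨C, hCmem, hCpair, hCbound⟩ := greedy hn' ME.length ME le_rfl hMEpair
    (fun a => le_trans ((List.filter_sublist (l := M)).countP_le) (hrow a))
    (fun b => le_trans ((List.filter_sublist (l := M)).countP_le) (hcol b))
  have hCl : C.length ≤ lcs (List.ofFn x) (List.ofFn y) := by
    have hCpair' : C.Pairwise (fun p q : ℕ × ℕ => p.1 < q.1 ∧ p.2 < q.2) :=
      hCpair.imp (fun h => h)
    have hCm : ∀ p ∈ C, ∃ (h1 : p.1 < (List.ofFn x).length) (h2 : p.2 < (List.ofFn y).length),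
        (List.ofFn x)[p.1] = (List.ofFn y)[p.2] := by
      intro p hp
      have hpME := hCmem p hp
      have hPBt : PB p = true := (List.mem_filter.mp hpME).2
      rw [hPBdef] at hPBt
      obtain ⟨h1, h2, heq⟩ := of_decide_eq_true hPBt
      refine ⟨by simpa using h1, by simpa using h2, ?_⟩
      rw [List.getElem_ofFn, List.getElem_ofFn]
      exact heq
    obtain ⟨w, hwlen, hwx, hwy⟩ := exists_common_of_matching C.length C
      (List.ofFn x) (List.ofFn y) le_rfl hCpair' hCm
    have := le_lcs hwx hwy
    rwa [hwlen] at this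
  -- assemble
  rw [← hzlen]
  have hfinal : (z.length : ℝ) = (ME.length : ℝ) + (MD.length : ℝ) := by
    rw [← hMlen]
    exact_mod_cast (congrArg (Nat.cast : ℕ → ℝ) hsplitlen).symm
  have hE : (ME.length : ℝ) ≤ (n' : ℝ) * (lcs (List.ofFn x) (List.ofFn y) : ℝ) := by
    have h1 : ME.length ≤ n' * C.length := hCbound
    have h2 : n' * C.length ≤ n' * lcs (List.ofFn x) (List.ofFn y) :=
      Nat.mul_le_mul_left _ hCl
    exact_mod_cast le_trans h1 h2
  linarith

end Key

end StmtAux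

open StmtAux in
theorem stmt5 {σ σ' : Type*} {n n' : ℕ} (x y : Fin n → σ)
    (B : σ → List σ') (hB : ∀ a, (B a).length = n')
    (lam : ℝ) (hlam0 : 0 ≤ lam)
    (hlam : ∀ a b : σ, a ≠ b → (lcs (B a) (B b) : ℝ) ≤ lam * n') :
    (n' : ℝ) * edd (List.ofFn x) (List.ofFn y) - 8 * n * n' * Real.sqrt lam ≤
        (edd (sprod x B) (sprod y B) : ℝ) ∧
      edd (sprod x B) (sprod y B) ≤ n' * edd (List.ofFn x) (List.ofFn y) := by
  have hsp_x : sprod x B = (List.ofFn x).flatMap B := rfl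
  have hsp_y : sprod y B = (List.ofFn y).flatMap B := rfl
  rcases Nat.eq_zero_or_pos n' with rfl | hn'
  · -- n' = 0 : both substituted strings are empty
    have hux : sprod x B = [] := by
      have := length_flatMap_const hB (List.ofFn x)
      rw [← hsp_x] at this
      simpa using List.length_eq_zero_iff.mp (by omega)
    have huy : sprod y B = [] := by
      have := length_flatMap_const hB (List.ofFn y)
      rw [← hsp_y] at this
      simpa using List.length_eq_zero_iff.mp (by omega)
    have hedd0 : edd (sprod x B) (sprod y B) = 0 := by
      have h := EditDist.edd_add_lcs (sprod x B) (sprod y B)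
      rw [hux, huy] at h ⊢
      simp at h
      omega
    constructor
    · rw [hedd0]
      push_cast
      simp
    · rw [hedd0]
      exact Nat.zero_le _
  · -- main case
    rw [hsp_x, hsp_y]
    have h1 := EditDist.edd_add_lcs ((List.ofFn x).flatMap B) ((List.ofFn y).flatMap B)
    have h2 := EditDist.edd_add_lcs (List.ofFn x) (List.ofFn y)
    rw [length_flatMap_const hB, length_flatMap_const hB, List.length_ofFn,
      List.length_ofFn] at h1
    rw [List.length_ofFn, List.length_ofFn] at h2
    -- the easy lower bound on lcs of the products
    have hlcs_ge : EditDist.lcs (List.ofFn x) (List.ofFn y) * n' ≤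
        EditDist.lcs ((List.ofFn x).flatMap B) ((List.ofFn y).flatMap B) := by
      obtain ⟨z, hzlen, hzx, hzy⟩ := EditDist.exists_lcs (List.ofFn x) (List.ofFn y)
      have h := EditDist.le_lcs (sublist_flatMap (B := B) hzx) (sublist_flatMap (B := B) hzy)
      rw [length_flatMap_const hB, hzlen] at h
      exact h
    obtain ⟨T, hT⟩ : ∃ T, n * n' = T := ⟨_, rfl⟩
    obtain ⟨P, hP⟩ : ∃ P, n' * EditDist.edd (List.ofFn x) (List.ofFn y) = P := ⟨_, rfl⟩
    obtain ⟨Q, hQ⟩ : ∃ Q, EditDist.lcs (List.ofFn x) (List.ofFn y) * n' = Q := ⟨_, rfl⟩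
    have e2 : P + 2 * Q = 2 * T := by
      rw [← hP, ← hQ, ← hT]
      calc n' * EditDist.edd (List.ofFn x) (List.ofFn y) +
            2 * (EditDist.lcs (List.ofFn x) (List.ofFn y) * n')
          = n' * (EditDist.edd (List.ofFn x) (List.ofFn y) +
              2 * EditDist.lcs (List.ofFn x) (List.ofFn y)) := by ring
        _ = n' * (n + n) := by rw [h2]
        _ = 2 * (n * n') := by ring
    have e1 : EditDist.edd ((List.ofFn x).flatMap B) ((List.ofFn y).flatMap B) +
        2 * EditDist.lcs ((List.ofFn x).flatMap B) ((List.ofFn y).flatMap B) = 2 * T := by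
      rw [← hT]; omega
    constructor
    · -- hard lower bound
      have hkey := key x y B hB hn' lam hlam0 hlam
      have r1 : (EditDist.edd ((List.ofFn x).flatMap B) ((List.ofFn y).flatMap B) : ℝ) +
          2 * (EditDist.lcs ((List.ofFn x).flatMap B) ((List.ofFn y).flatMap B) : ℝ) =
            2 * (T : ℝ) := by exact_mod_cast congrArg (Nat.cast : ℕ → ℝ) e1
      have r2 : (P : ℝ) + 2 * (Q : ℝ) = 2 * (T : ℝ) := by
        exact_mod_cast congrArg (Nat.cast : ℕ → ℝ) e2
      have rQ : (Q : ℝ) = (EditDist.lcs (List.ofFn x) (List.ofFn y) : ℝ) * n' := by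
        rw [← hQ]; push_cast; ring
      have rP : (P : ℝ) = (n' : ℝ) * (EditDist.edd (List.ofFn x) (List.ofFn y) : ℝ) := by
        rw [← hP]; push_cast; ring
      have hsq := Real.sqrt_nonneg lam
      have hnn : (0:ℝ) ≤ (n:ℝ) * n' := by positivity
      by_cases hl : lam ≤ 1
      · have hs1 : Real.sqrt lam ≤ 1 := Real.sqrt_le_one.mpr hl
        have hs2 : lam ≤ Real.sqrt lam := by
          nlinarith [Real.sq_sqrt hlam0]
        have haux : (n:ℝ) * n' * lam ≤ (n:ℝ) * n' * Real.sqrt lam :=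
          mul_le_mul_of_nonneg_left hs2 hnn
        have h0 : (0:ℝ) ≤ (n:ℝ) * n' * Real.sqrt lam := by positivity
        linarith
      · push_neg at hl
        have hs1 : (1:ℝ) ≤ Real.sqrt lam := by
          rw [show (1:ℝ) = Real.sqrt 1 from (Real.sqrt_one).symm]
          exact Real.sqrt_le_sqrt (le_of_lt hl)
        have hP2T : P ≤ 2 * T := by omega
        have hTr : (T : ℝ) = (n:ℝ) * n' := by rw [← hT]; push_cast; ring
        have haux : (n:ℝ) * n' * 1 ≤ (n:ℝ) * n' * Real.sqrt lam :=
          mul_le_mul_of_nonneg_left hs1 hnn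
        have hedd_nonneg : (0:ℝ) ≤ (EditDist.edd ((List.ofFn x).flatMap B) ((List.ofFn y).flatMap B) : ℝ) :=
          Nat.cast_nonneg _
        have hp2t : (P:ℝ) ≤ 2 * T := by exact_mod_cast hP2T
        rw [hTr] at hp2t
        linarith
    · -- upper bound
      rw [hP]
      rw [hQ] at hlcs_ge
      omega
end

section
/- The E-distance from x to y equals the minimum over all vectors Z = (z_{i,s}) with z_{0,1} = 1 of cost(Z) + ∑_{s∈[n]} Ham(x[s], y[z_{h,s}]), where cost(Z) = ∑_{i=0}^{h-1} ∑_{s∈B_i} ∑_{j=0}^{b-1} |z_{i,s} + j·l_{i+1} - z_{i+1, s + j·l_{i+1}}| and Ham(x[s], y[u]) is 1 if u ∉ [n] or x[s] ≠ y[u], and 0 otherwise. -/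
open EditDist

open scoped Classical

/-- The `E`-distance from the paper (0-indexed).  `Edist x y n b k s u` is the `E`-distance of the
substring of `x` of length `b ^ k` starting at position `s` to position `u` of `y` (a string of
length `n`); `k` is the height of the node in the `b`-ary tree, i.e. `k = h - i` for level `i`.
At the leaves it is the Hamming-type cost; at an internal node it is the sum over the `b`
children of the minimum over integer shifts `r` of (child distance at the shifted position)
plus `|r|`. -/
noncomputable def Edist {α : Type*} (x y : ℕ → α) (n b : ℕ) : ℕ → ℕ → ℤ → ℝ
  | 0, s, u => if 0 ≤ u ∧ u < (n : ℤ) ∧ x s = y u.toNat then 0 else 1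
  | k + 1, s, u =>
      ∑ j ∈ Finset.range b,
        ⨅ r : ℤ, (Edist x y n b k (s + j * b ^ k) (u + (j : ℤ) * (b : ℤ) ^ k + r) + |(r : ℝ)|)

/-- the cost of a matching vector `Z`: the sum, over all internal nodes of the `b`-ary tree of
height `h` and all their children, of the displacement between the child's matched position and
the position it would get from its parent.  The level-`i` blocks start at the positions
`t * b ^ (h - i)` for `t < b ^ i`, and `l_{i+1} = b ^ (h - i - 1)`. -/
noncomputable def Zcost (b h : ℕ) (Z : ℕ → ℕ → ℤ) : ℝ :=
  ∑ i ∈ Finset.range h, ∑ t ∈ Finset.range (b ^ i), ∑ j ∈ Finset.range b,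
    |((Z i (t * b ^ (h - i)) + (j : ℤ) * (b : ℤ) ^ (h - i - 1)
        - Z (i + 1) (t * b ^ (h - i) + j * b ^ (h - i - 1)) : ℤ) : ℝ)|

/-- the Hamming term: each leaf `s` pays 1 unless its matched position `Z h s` is a valid
position of `y` carrying the same character as `x s`. -/
noncomputable def Zham {α : Type*} (x y : ℕ → α) (b h : ℕ) (Z : ℕ → ℕ → ℤ) : ℝ :=
  ∑ s ∈ Finset.range (b ^ h),
    if 0 ≤ Z h s ∧ Z h s < (b ^ h : ℤ) ∧ x s = y (Z h s).toNat then 0 else 1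

open Finset in
lemma sum_range_mul' {M : Type*} [AddCommMonoid M] (f : ℕ → M) (a m : ℕ) :
    ∑ t ∈ Finset.range (a * m), f t = ∑ j ∈ Finset.range a, ∑ t ∈ Finset.range m, f (j * m + t) := by
  induction a with
  | zero => simp
  | succ a ih =>
      rw [Nat.succ_mul, Finset.sum_range_add, ih, Finset.sum_range_succ]

lemma Edist_nonneg {α : Type*} (x y : ℕ → α) (n b : ℕ) :
    ∀ (k : ℕ) (s : ℕ) (u : ℤ), 0 ≤ Edist x y n b k s u := by
  intro k
  induction k with
  | zero => intro s u; rw [Edist]; positivity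
  | succ k ih =>
      intro s u
      rw [Edist]
      refine Finset.sum_nonneg fun j _ => le_ciInf fun r => ?_
      have := ih (s + j * b ^ k) (u + (j : ℤ) * (b : ℤ) ^ k + r)
      positivity

lemma Zcost_nonneg (b k : ℕ) (Z : ℕ → ℕ → ℤ) : 0 ≤ Zcost b k Z := by
  refine Finset.sum_nonneg fun i _ => Finset.sum_nonneg fun t _ => Finset.sum_nonneg fun j _ => ?_
  positivity

noncomputable def ZhamN {α : Type*} (x y : ℕ → α) (n b k : ℕ) (Z : ℕ → ℕ → ℤ) : ℝ :=
  ∑ s ∈ Finset.range (b ^ k),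
    if 0 ≤ Z k s ∧ Z k s < (n : ℤ) ∧ x s = y (Z k s).toNat then 0 else 1

lemma ZhamN_nonneg {α : Type*} (x y : ℕ → α) (n b k : ℕ) (Z : ℕ → ℕ → ℤ) :
    0 ≤ ZhamN x y n b k Z := by
  refine Finset.sum_nonneg fun s _ => ?_
  split <;> norm_num

lemma Zham_eq {α : Type*} (x y : ℕ → α) (b h : ℕ) (Z : ℕ → ℕ → ℤ) :
    Zham x y b h Z = ZhamN x y (b ^ h) b h Z := by
  unfold Zham ZhamN
  norm_num

lemma Zcost_decomp (b k : ℕ) (Z : ℕ → ℕ → ℤ) :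
    Zcost b (k+1) Z
      = (∑ j ∈ Finset.range b, |((Z 0 0 + (j:ℤ) * (b:ℤ) ^ k - Z 1 (j * b ^ k) : ℤ) : ℝ)|)
        + ∑ j ∈ Finset.range b, Zcost b k (fun i t => Z (i+1) (j * b ^ k + t)) := by
  unfold Zcost
  rw [Finset.sum_range_succ', add_comm]
  congr 1
  · simp [Nat.sub_zero, Nat.add_sub_cancel]
  · rw [Finset.sum_comm]
    refine Finset.sum_congr rfl fun i hi => ?_
    have hik : i < k := Finset.mem_range.mp hi
    have hpow : b ^ i * b ^ (k - i) = b ^ k := by rw [← pow_add]; congr 1; omega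
    simp only [Nat.succ_sub_succ_eq_sub]
    rw [show b ^ (i+1) = b * b ^ i from pow_succ' b i, sum_range_mul']
    refine Finset.sum_congr rfl fun j hj => Finset.sum_congr rfl fun t ht => ?_
    have e1 : (j * b ^ i + t) * b ^ (k - i) = j * b ^ k + t * b ^ (k - i) := by
      rw [add_mul, mul_assoc, hpow]
    rw [e1]; simp [add_assoc]

lemma ZhamN_decomp {α : Type*} (x y : ℕ → α) (n b k : ℕ) (Z : ℕ → ℕ → ℤ) :
    ZhamN x y n b (k+1) Z
      = ∑ j ∈ Finset.range b,
          ZhamN (fun t => x (j * b ^ k + t)) y n b k (fun i t => Z (i+1) (j * b ^ k + t)) := by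
  unfold ZhamN
  rw [show b ^ (k+1) = b * b ^ k from pow_succ' b k, sum_range_mul']

lemma Zcost_congr {b k : ℕ} (hb : 0 < b) {Z Z' : ℕ → ℕ → ℤ}
    (h : ∀ i t, i ≤ k → t < b ^ k → Z i t = Z' i t) : Zcost b k Z = Zcost b k Z' := by
  unfold Zcost
  refine Finset.sum_congr rfl fun i hi => Finset.sum_congr rfl fun t ht =>
    Finset.sum_congr rfl fun j hj => ?_
  have hik : i < k := Finset.mem_range.mp hi
  have htb : t < b ^ i := Finset.mem_range.mp ht
  have hjb : j < b := Finset.mem_range.mp hj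
  have hpow : b ^ i * b ^ (k - i) = b ^ k := by rw [← pow_add]; congr 1; omega
  have hpow2 : b ^ (k - i - 1) * b = b ^ (k - i) := by rw [← pow_succ]; congr 1; omega
  have h1 : t * b ^ (k - i) < b ^ k := by
    calc t * b ^ (k - i) < (t + 1) * b ^ (k - i) := by
          have : 0 < b ^ (k - i) := Nat.pow_pos hb
          nlinarith
      _ ≤ b ^ i * b ^ (k - i) := Nat.mul_le_mul_right _ htb
      _ = b ^ k := hpow
  have h2 : t * b ^ (k - i) + j * b ^ (k - i - 1) < b ^ k := by
    have c1 : 0 < b ^ (k - i - 1) := Nat.pow_pos hb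
    have c2 : (j + 1) * b ^ (k - i - 1) ≤ b * b ^ (k - i - 1) := Nat.mul_le_mul_right _ hjb
    have c3 : (t + 1) * b ^ (k - i) ≤ b ^ i * b ^ (k - i) := Nat.mul_le_mul_right _ htb
    calc t * b ^ (k - i) + j * b ^ (k - i - 1)
        < t * b ^ (k - i) + (j + 1) * b ^ (k - i - 1) := by nlinarith
      _ ≤ t * b ^ (k - i) + b ^ (k - i - 1) * b := by nlinarith
      _ = (t + 1) * b ^ (k - i) := by rw [hpow2]; ring
      _ ≤ b ^ i * b ^ (k - i) := c3
      _ = b ^ k := hpow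
  rw [h i _ (by omega) h1, h (i+1) _ (by omega) h2]

lemma ZhamN_congr {α : Type*} (x x' y : ℕ → α) (n b k : ℕ) {Z Z' : ℕ → ℕ → ℤ}
    (hx : ∀ t, t < b ^ k → x t = x' t)
    (h : ∀ t, t < b ^ k → Z k t = Z' k t) :
    ZhamN x y n b k Z = ZhamN x' y n b k Z' := by
  unfold ZhamN
  refine Finset.sum_congr rfl fun t ht => ?_
  have htb : t < b ^ k := Finset.mem_range.mp ht
  rw [h t htb, hx t htb]

lemma bddBelow_ZcostZham {α : Type*} (x y : ℕ → α) (n b k : ℕ) (v : ℤ) :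
    BddBelow (Set.range fun Z : {Z : ℕ → ℕ → ℤ // Z 0 0 = v} =>
      Zcost b k Z.1 + ZhamN x y n b k Z.1) := by
  refine ⟨0, ?_⟩
  rintro _ ⟨W, rfl⟩
  have := Zcost_nonneg b k W.1
  have := ZhamN_nonneg x y n b k W.1
  positivity

set_option maxHeartbeats 1000000 in
lemma Edist_eq_iInf {α : Type*} (x y : ℕ → α) (n b : ℕ) (hb : 2 ≤ b) :
    ∀ (k s : ℕ) (u : ℤ),
      Edist x y n b k s u
        = ⨅ Z : {Z : ℕ → ℕ → ℤ // Z 0 0 = u},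
            (Zcost b k Z.1 + ZhamN (fun t => x (s + t)) y n b k Z.1) := by
  intro k
  induction k with
  | zero =>
      intro s u
      haveI : Nonempty {Z : ℕ → ℕ → ℤ // Z 0 0 = u} := ⟨⟨fun _ _ => u, rfl⟩⟩
      have hc : ∀ Z : {Z : ℕ → ℕ → ℤ // Z 0 0 = u},
          Zcost b 0 Z.1 + ZhamN (fun t => x (s + t)) y n b 0 Z.1
            = Edist x y n b 0 s u := by
        rintro ⟨Z, hZ⟩
        simp [Zcost, ZhamN, Edist, hZ]
      exact ((iInf_congr hc).trans ciInf_const).symm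
  | succ k ih =>
      intro s u
      haveI : ∀ v : ℤ, Nonempty {Z : ℕ → ℕ → ℤ // Z 0 0 = v} := fun v => ⟨⟨fun _ _ => v, rfl⟩⟩
      have hbpos : 0 < b := by omega
      have hbk : 0 < b ^ k := Nat.pow_pos hbpos
      have hEd : Edist x y n b (k+1) s u
          = ∑ j ∈ Finset.range b, ⨅ r : ℤ,
              (Edist x y n b k (s + j * b ^ k) (u + (j:ℤ) * (b:ℤ) ^ k + r) + |(r:ℝ)|) := by
        rw [Edist]
      have hbdd : ∀ (s' : ℕ) (u' : ℤ), BddBelow (Set.range fun r : ℤ =>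
          Edist x y n b k s' (u' + r) + |(r:ℝ)|) := by
        intro s' u'
        refine ⟨0, ?_⟩
        rintro _ ⟨r, rfl⟩
        have := Edist_nonneg x y n b k s' (u' + r)
        positivity
      apply le_antisymm
      · refine le_ciInf ?_
        rintro ⟨Z, hZ⟩
        rw [hEd, Zcost_decomp, ZhamN_decomp, add_assoc, ← Finset.sum_add_distrib,
          ← Finset.sum_add_distrib]
        simp only [← add_assoc]
        refine Finset.sum_le_sum fun j hj => ?_
        set v : ℤ := u + (j:ℤ) * (b:ℤ) ^ k with hv
        set r : ℤ := Z 1 (j * b ^ k) - v with hr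
        have h1 : (⨅ r' : ℤ, (Edist x y n b k (s + j * b ^ k) (v + r') + |(r':ℝ)|))
            ≤ Edist x y n b k (s + j * b ^ k) (v + r) + |(r:ℝ)| :=
          ciInf_le (hbdd _ _) r
        have h2 : v + r = Z 1 (j * b ^ k) := by rw [hr]; ring
        rw [h2] at h1
        have h3 : Edist x y n b k (s + j * b ^ k) (Z 1 (j * b ^ k))
            ≤ Zcost b k (fun i t => Z (i+1) (j * b ^ k + t))
              + ZhamN (fun t => x (s + j * b ^ k + t)) y n b k
                  (fun i t => Z (i+1) (j * b ^ k + t)) := by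
          rw [ih]
          exact ciInf_le (bddBelow_ZcostZham _ y n b k _)
            ⟨fun i t => Z (i+1) (j * b ^ k + t), rfl⟩
        have h4 : |((Z 0 0 + (j:ℤ) * (b:ℤ) ^ k - Z 1 (j * b ^ k) : ℤ) : ℝ)| = |(r : ℝ)| := by
          rw [hr, hv, hZ]
          push_cast
          rw [abs_sub_comm]
        calc (⨅ r' : ℤ, (Edist x y n b k (s + j * b ^ k) (v + r') + |(r':ℝ)|))
            ≤ Edist x y n b k (s + j * b ^ k) (Z 1 (j * b ^ k)) + |(r:ℝ)| := h1
          _ ≤ |((Z 0 0 + (j:ℤ) * (b:ℤ) ^ k - Z 1 (j * b ^ k) : ℤ) : ℝ)|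
                + Zcost b k (fun i t => Z (i+1) (j * b ^ k + t))
                + ZhamN (fun t => x (s + j * b ^ k + t)) y n b k
                    (fun i t => Z (i+1) (j * b ^ k + t)) := by
              rw [h4]; linarith
      · rw [hEd]
        refine le_of_forall_pos_le_add fun ε hε => ?_
        have hbR : (0:ℝ) < b := by exact_mod_cast hbpos
        set δ : ℝ := ε / (2 * b) with hδdef
        have hδ : 0 < δ := by positivity
        have key : ∀ j : ℕ, ∃ W : ℕ → ℕ → ℤ,
            |((W 0 0 - (u + (j:ℤ) * (b:ℤ) ^ k) : ℤ) : ℝ)|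
              + (Zcost b k W + ZhamN (fun t => x (s + j * b ^ k + t)) y n b k W)
              < (⨅ r : ℤ, (Edist x y n b k (s + j * b ^ k) (u + (j:ℤ) * (b:ℤ) ^ k + r)
                  + |(r:ℝ)|)) + 2*δ := by
          intro j
          obtain ⟨r, hr⟩ := exists_lt_of_ciInf_lt
            (a := (⨅ r : ℤ, (Edist x y n b k (s + j * b ^ k)
                (u + (j:ℤ) * (b:ℤ) ^ k + r) + |(r:ℝ)|)) + δ)
            (lt_add_of_pos_right _ hδ)
          have hIH := ih (s + j * b ^ k) (u + (j:ℤ) * (b:ℤ) ^ k + r)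
          obtain ⟨⟨W, hW⟩, hW2⟩ := exists_lt_of_ciInf_lt
            (f := fun Z : {Z : ℕ → ℕ → ℤ // Z 0 0 = u + (j:ℤ) * (b:ℤ) ^ k + r} =>
              Zcost b k Z.1 + ZhamN (fun t => x (s + j * b ^ k + t)) y n b k Z.1)
            (a := Edist x y n b k (s + j * b ^ k) (u + (j:ℤ) * (b:ℤ) ^ k + r) + δ)
            (by rw [← hIH]; exact lt_add_of_pos_right _ hδ)
          have hr0 : W 0 0 - (u + (j:ℤ) * (b:ℤ) ^ k) = r := by rw [hW]; ring
          refine ⟨W, ?_⟩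
          rw [hr0]
          have habs : 0 ≤ |(r:ℝ)| := abs_nonneg _
          linarith
        choose W hW using key
        set Z : ℕ → ℕ → ℤ :=
          fun i m => if i = 0 then u else W (m / b ^ k) (i - 1) (m % b ^ k) with hZdef
        have hZ00 : Z 0 0 = u := by simp [hZdef]
        have step1 : (⨅ V : {V : ℕ → ℕ → ℤ // V 0 0 = u},
              (Zcost b (k+1) V.1 + ZhamN (fun t => x (s + t)) y n b (k+1) V.1))
            ≤ Zcost b (k+1) Z + ZhamN (fun t => x (s + t)) y n b (k+1) Z := by
          exact ciInf_le (bddBelow_ZcostZham _ y n b (k+1) _) ⟨Z, hZ00⟩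
        refine step1.trans ?_
        rw [Zcost_decomp, ZhamN_decomp, add_assoc, ← Finset.sum_add_distrib,
          ← Finset.sum_add_distrib]
        simp only [← add_assoc]
        have step2 : ∀ j ∈ Finset.range b,
            |((Z 0 0 + (j:ℤ) * (b:ℤ) ^ k - Z 1 (j * b ^ k) : ℤ) : ℝ)|
              + Zcost b k (fun i t => Z (i+1) (j * b ^ k + t))
              + ZhamN (fun t => x (s + j * b ^ k + t)) y n b k
                  (fun i t => Z (i+1) (j * b ^ k + t))
            ≤ (⨅ r : ℤ, (Edist x y n b k (s + j * b ^ k) (u + (j:ℤ) * (b:ℤ) ^ k + r)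
                + |(r:ℝ)|)) + 2*δ := by
          intro j hj
          have eZ1 : ∀ i t, t < b ^ k → Z (i+1) (j * b ^ k + t) = W j i t := by
            intro i t htlt
            have harg : j * b ^ k + t = t + b ^ k * j := by ring
            simp only [hZdef, harg]
            rw [if_neg (by omega), Nat.add_mul_div_left _ _ hbk,
              Nat.div_eq_of_lt htlt, Nat.add_mul_mod_self_left, Nat.mod_eq_of_lt htlt]
            simp
          have eqC : Zcost b k (fun i t => Z (i+1) (j * b ^ k + t)) = Zcost b k (W j) :=
            Zcost_congr hbpos fun i t _ ht => eZ1 i t ht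
          have eqH : ZhamN (fun t => x (s + j * b ^ k + t)) y n b k
              (fun i t => Z (i+1) (j * b ^ k + t))
              = ZhamN (fun t => x (s + j * b ^ k + t)) y n b k (W j) :=
            ZhamN_congr _ _ _ _ _ _ (fun t _ => rfl) (fun t ht => eZ1 k t ht)
          have eZroot : Z 1 (j * b ^ k) = W j 0 0 := by
            simp only [hZdef]
            rw [if_neg (by omega), Nat.mul_div_cancel _ hbk, Nat.mul_mod_left]
          have eqA : |((Z 0 0 + (j:ℤ) * (b:ℤ) ^ k - Z 1 (j * b ^ k) : ℤ) : ℝ)|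
              = |((W j 0 0 - (u + (j:ℤ) * (b:ℤ) ^ k) : ℤ) : ℝ)| := by
            rw [hZ00, eZroot]
            push_cast
            rw [abs_sub_comm]
          rw [eqC, eqH, eqA]
          have := hW j
          linarith
        calc ∑ j ∈ Finset.range b,
              (|((Z 0 0 + (j:ℤ) * (b:ℤ) ^ k - Z 1 (j * b ^ k) : ℤ) : ℝ)|
                + Zcost b k (fun i t => Z (i+1) (j * b ^ k + t))
                + ZhamN (fun t => x (s + j * b ^ k + t)) y n b k
                    (fun i t => Z (i+1) (j * b ^ k + t)))
            ≤ ∑ j ∈ Finset.range b,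
              ((⨅ r : ℤ, (Edist x y n b k (s + j * b ^ k) (u + (j:ℤ) * (b:ℤ) ^ k + r)
                  + |(r:ℝ)|)) + 2*δ) := Finset.sum_le_sum step2
          _ = (∑ j ∈ Finset.range b,
              ⨅ r : ℤ, (Edist x y n b k (s + j * b ^ k) (u + (j:ℤ) * (b:ℤ) ^ k + r)
                  + |(r:ℝ)|)) + ε := by
              rw [Finset.sum_add_distrib, Finset.sum_const, Finset.card_range,
                nsmul_eq_mul, hδdef]
              have : (b:ℝ) ≠ 0 := ne_of_gt hbR
              field_simp


theorem stmt15 {α : Type*} (b h : ℕ) (hb : 2 ≤ b) (x y : ℕ → α) :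
    Edist x y (b ^ h) b h 0 0 =
      ⨅ Z : {Z : ℕ → ℕ → ℤ // Z 0 0 = 0}, (Zcost b h Z.1 + Zham x y b h Z.1) := by
  rw [Edist_eq_iInf x y (b ^ h) b hb h 0 0]
  refine iInf_congr fun Z => ?_
  rw [Zham_eq, show (fun t => x (0 + t)) = x from funext fun t => by rw [zero_add]]
end
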